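/- arXiv:1404.1103 — 2 statements merged into one kernel-verified Lean document; each statement's English description precedes it below -/
import Mathlib

section
/- Let z, θ be independent uniform (0,1) random variables, X := √(-2 log z)·cos(2πθ), and Y the discretized version obtained by rounding z and θ to the nearest half-integer multiple of 1/N with N = ⌊δ^{-3}⌋, for δ sufficiently small. Then Pr(|X - Y| > δ) < δ. -/
open Real MeasureTheory

/-- Rounding of `z` to the nearest half-integer multiple of `1/N`. -/
noncomputable def rnd (N : ℕ) (z : ℝ) : ℝ := (⌊z * N⌋ + 1 / 2) / N

lemma cos_lip (x y : ℝ) : |Real.cos x - Real.cos y| ≤ |x - y| := by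
  rw [Real.cos_sub_cos]
  calc |-2 * Real.sin ((x + y) / 2) * Real.sin ((x - y) / 2)|
      = 2 * |Real.sin ((x + y) / 2)| * |Real.sin ((x - y) / 2)| := by
        rw [abs_mul, abs_mul]; norm_num
    _ ≤ 2 * 1 * |(x - y) / 2| := by
        have h1 : |Real.sin ((x + y) / 2)| ≤ 1 := Real.abs_sin_le_one _
        have h2 : |Real.sin ((x - y) / 2)| ≤ |(x - y) / 2| := Real.abs_sin_le_abs
        have h3 : (0:ℝ) ≤ |Real.sin ((x - y) / 2)| := abs_nonneg _
        nlinarith [abs_nonneg ((x - y) / 2)]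
    _ = |x - y| := by rw [abs_div]; norm_num; ring

lemma rnd_close {N : ℕ} (hN : 0 < N) (z : ℝ) : |rnd N z - z| ≤ 1 / (2 * N) := by
  have hN' : (0:ℝ) < N := Nat.cast_pos.mpr hN
  have h1 : (⌊z * N⌋ : ℝ) ≤ z * N := Int.floor_le _
  have h2 : z * N < ⌊z * N⌋ + 1 := Int.lt_floor_add_one _
  have key : rnd N z - z = ((⌊z * N⌋ : ℝ) + 1 / 2 - z * N) / N := by
    rw [rnd]; field_simp
  have habs : |(⌊z * N⌋ : ℝ) + 1 / 2 - z * N| ≤ 1 / 2 :=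
    abs_le.mpr ⟨by linarith, by linarith⟩
  rw [key, abs_div, abs_of_pos hN', div_le_div_iff₀ hN' (by positivity)]
  nlinarith

lemma sqrt_diff {a b : ℝ} (ha : 0 < a) (hb : 0 ≤ b) :
    |Real.sqrt a - Real.sqrt b| ≤ |a - b| / Real.sqrt a := by
  have hsa : 0 < Real.sqrt a := Real.sqrt_pos.mpr ha
  have hsb : 0 ≤ Real.sqrt b := Real.sqrt_nonneg b
  rw [le_div_iff₀ hsa]
  have hab : a - b = (Real.sqrt a - Real.sqrt b) * (Real.sqrt a + Real.sqrt b) := by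
    have h1 := Real.sq_sqrt ha.le
    have h2 := Real.sq_sqrt hb
    nlinarith
  calc |Real.sqrt a - Real.sqrt b| * Real.sqrt a
      ≤ |Real.sqrt a - Real.sqrt b| * (Real.sqrt a + Real.sqrt b) :=
        mul_le_mul_of_nonneg_left (by linarith) (abs_nonneg _)
    _ = |(Real.sqrt a - Real.sqrt b) * (Real.sqrt a + Real.sqrt b)| := by
        rw [abs_mul, abs_of_nonneg (by linarith : (0:ℝ) ≤ Real.sqrt a + Real.sqrt b)]
    _ = |a - b| := by rw [← hab]


set_option maxHeartbeats 1000000 in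
lemma main_est {δ z θ z' θ' : ℝ} (hδ : 0 < δ) (hδ' : δ < 1/2048)
    (hz1 : δ/4 ≤ z) (hz2 : z ≤ 1 - δ/4)
    (hzr : |z' - z| ≤ δ^3) (hθr : |θ' - θ| ≤ δ^3) :
    |Real.sqrt (-2 * Real.log z) * Real.cos (2 * π * θ) -
      Real.sqrt (-2 * Real.log z') * Real.cos (2 * π * θ')| ≤ δ := by
  have hδsq : δ^2 ≤ 1/16 := by nlinarith
  have hδ3 : δ^3 ≤ δ/16 := by nlinarith [mul_le_mul_of_nonneg_left hδsq hδ.le]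
  obtain ⟨hzr1, hzr2⟩ := abs_le.mp hzr
  have hz'lb : δ/8 ≤ z' := by linarith
  have hz'ub : z' ≤ 1 - δ/8 := by linarith
  have zpos : 0 < z := by linarith
  have z'pos : 0 < z' := by linarith
  set a := -2 * Real.log z with ha_def
  set b := -2 * Real.log z' with hb_def
  have hb0 : 0 ≤ b := by
    have : Real.log z' ≤ 0 := Real.log_nonpos z'pos.le (by linarith)
    rw [hb_def]; linarith
  have ha : δ/2 ≤ a := by
    have h1 : Real.log (1 - δ/4) ≤ (1 - δ/4) - 1 :=
      Real.log_le_sub_one_of_pos (by linarith)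
    have h2 : Real.log z ≤ Real.log (1 - δ/4) :=
      Real.log_le_log zpos hz2
    rw [ha_def]; linarith
  have ha0 : 0 < a := by linarith
  -- |a - b| ≤ 16 δ²
  have u1 : Real.log z' - Real.log z ≤ 8 * δ^2 := by
    have e1 : Real.log z' - Real.log z = Real.log (z'/z) :=
      (Real.log_div z'pos.ne' zpos.ne').symm
    have l1 : Real.log (z'/z) ≤ z'/z - 1 := Real.log_le_sub_one_of_pos (by positivity)
    have l2 : z'/z - 1 ≤ 8 * δ^2 := by
      rw [div_sub_one zpos.ne', div_le_iff₀ zpos]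
      nlinarith
    linarith
  have u2 : Real.log z - Real.log z' ≤ 8 * δ^2 := by
    have e1 : Real.log z - Real.log z' = Real.log (z/z') :=
      (Real.log_div zpos.ne' z'pos.ne').symm
    have l1 : Real.log (z/z') ≤ z/z' - 1 := Real.log_le_sub_one_of_pos (by positivity)
    have l2 : z/z' - 1 ≤ 8 * δ^2 := by
      rw [div_sub_one z'pos.ne', div_le_iff₀ z'pos]
      nlinarith
    linarith
  have hab : |a - b| ≤ 16 * δ^2 := by
    rw [ha_def, hb_def]
    rw [abs_le]
    constructor <;> nlinarith
  -- lower bound on √a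
  have hsa_lb : 32 * δ ≤ Real.sqrt a := by
    have h1 : Real.sqrt (δ/2) ≤ Real.sqrt a := Real.sqrt_le_sqrt (by linarith)
    have h2 : 32 * δ ≤ Real.sqrt (δ/2) := by
      rw [show (32:ℝ) * δ = Real.sqrt ((32*δ)^2) by
        rw [Real.sqrt_sq (by positivity)]]
      exact Real.sqrt_le_sqrt (by nlinarith)
    linarith
  have hA : |Real.sqrt a - Real.sqrt b| ≤ δ/2 := by
    have h1 := sqrt_diff ha0 hb0
    have h2 : |a - b| / Real.sqrt a ≤ (16 * δ^2) / (32 * δ) := by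
      apply div_le_div₀ (by positivity) hab (by positivity) hsa_lb
    have h3 : (16 * δ^2) / (32 * δ) = δ/2 := by
      field_simp; ring
    linarith
  -- upper bound on √b
  have hsb_ub : Real.sqrt b ≤ 4/δ := by
    have hlog : Real.log z'⁻¹ ≤ z'⁻¹ - 1 :=
      Real.log_le_sub_one_of_pos (by positivity)
    rw [Real.log_inv, inv_eq_one_div] at hlog
    have hlog' := mul_le_mul_of_nonneg_right hlog z'pos.le
    have he : (1/z' - 1) * z' = 1 - z' := by field_simp
    rw [he] at hlog'
    have hL : 0 ≤ -Real.log z' := by rw [hb_def] at hb0; linarith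
    have hz8 : δ ≤ 8 * z' := by linarith
    have hb16 : b ≤ 16/δ^2 := by
      rw [hb_def, le_div_iff₀ (by positivity : (0:ℝ) < δ^2)]
      nlinarith [hlog', mul_nonneg hL hδ.le,
        mul_le_mul_of_nonneg_left hz8 (mul_nonneg hL hδ.le),
        mul_le_mul_of_nonneg_right hlog' hδ.le, hδ.le, hδ', z'pos.le,
        mul_nonneg z'pos.le hδ.le]
    calc Real.sqrt b ≤ Real.sqrt (16/δ^2) := Real.sqrt_le_sqrt hb16
      _ = 4/δ := by
          rw [show (16:ℝ)/δ^2 = (4/δ)^2 by ring, Real.sqrt_sq (by positivity)]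
  -- cosine bounds
  have hcos : |Real.cos (2*π*θ) - Real.cos (2*π*θ')| ≤ 7 * δ^3 := by
    have h1 := cos_lip (2*π*θ) (2*π*θ')
    have h2 : |2*π*θ - 2*π*θ'| = 2*π*|θ - θ'| := by
      rw [show 2*π*θ - 2*π*θ' = 2*π*(θ - θ') by ring, abs_mul,
        abs_of_pos (by positivity : (0:ℝ) < 2*π)]
    have hπ : π < 3.15 := Real.pi_lt_d2
    have h3 : |θ - θ'| ≤ δ^3 := by rw [abs_sub_comm]; exact hθr
    have h4 : (0:ℝ) ≤ |θ - θ'| := abs_nonneg _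
    nlinarith [Real.pi_pos, pow_pos hδ 3]
  have hcos1 : |Real.cos (2*π*θ)| ≤ 1 := Real.abs_cos_le_one _
  -- combine
  have key : Real.sqrt a * Real.cos (2*π*θ) - Real.sqrt b * Real.cos (2*π*θ') =
      (Real.sqrt a - Real.sqrt b) * Real.cos (2*π*θ) +
        Real.sqrt b * (Real.cos (2*π*θ) - Real.cos (2*π*θ')) := by ring
  rw [key]
  have t1 : |(Real.sqrt a - Real.sqrt b) * Real.cos (2*π*θ)| ≤ δ/2 := by
    rw [abs_mul]
    calc |Real.sqrt a - Real.sqrt b| * |Real.cos (2*π*θ)| ≤ (δ/2) * 1 :=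
          mul_le_mul hA hcos1 (abs_nonneg _) (by linarith)
      _ = δ/2 := by ring
  have t2 : |Real.sqrt b * (Real.cos (2*π*θ) - Real.cos (2*π*θ'))| ≤ δ/2 := by
    rw [abs_mul, abs_of_nonneg (Real.sqrt_nonneg b)]
    calc Real.sqrt b * |Real.cos (2*π*θ) - Real.cos (2*π*θ')| ≤ (4/δ) * (7 * δ^3) :=
          mul_le_mul hsb_ub hcos (abs_nonneg _) (by positivity)
      _ = 28 * δ^2 := by field_simp; ring
      _ ≤ δ/2 := by nlinarith
  calc |(Real.sqrt a - Real.sqrt b) * Real.cos (2*π*θ) +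
        Real.sqrt b * (Real.cos (2*π*θ) - Real.cos (2*π*θ'))| ≤
      |(Real.sqrt a - Real.sqrt b) * Real.cos (2*π*θ)| +
        |Real.sqrt b * (Real.cos (2*π*θ) - Real.cos (2*π*θ'))| := abs_add_le _ _
    _ ≤ δ/2 + δ/2 := add_le_add t1 t2
    _ = δ := by ring

/-- for `δ` sufficiently small, with `z, θ` independent uniform on `(0,1)`,
`X := √(-2 log z)·cos(2πθ)`, and `Y` its discretization obtained by rounding `z, θ` to the
nearest half-integer multiple of `1/N` with `N = ⌊δ⁻³⌋`, we have `Pr(|X - Y| > δ) < δ`. -/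
theorem stmt3 :
    ∃ δ₀ : ℝ, 0 < δ₀ ∧ ∀ δ : ℝ, 0 < δ → δ < δ₀ →
      (volume {p : ℝ × ℝ | p.1 ∈ Set.Ioo (0:ℝ) 1 ∧ p.2 ∈ Set.Ioo (0:ℝ) 1 ∧
        δ < |Real.sqrt (-2 * Real.log p.1) * Real.cos (2 * π * p.2) -
              Real.sqrt (-2 * Real.log (rnd ⌊δ⁻¹ ^ 3⌋₊ p.1)) *
                Real.cos (2 * π * (rnd ⌊δ⁻¹ ^ 3⌋₊ p.2))|}) < ENNReal.ofReal δ := by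
  refine ⟨1/2048, by norm_num, fun δ hδ hδ' => ?_⟩
  set N := ⌊δ⁻¹ ^ 3⌋₊ with hNdef
  have hδinv : δ * δ⁻¹ = 1 := mul_inv_cancel₀ hδ.ne'
  have hinvpos : (0:ℝ) < δ⁻¹ := inv_pos.mpr hδ
  have hinv : (2048:ℝ) < δ⁻¹ := by nlinarith
  have hcube : δ^3 * δ⁻¹^3 = 1 := by
    rw [← mul_pow, hδinv, one_pow]
  have hN1 : δ⁻¹^3 - 1 < (N:ℝ) := by
    have := Nat.lt_floor_add_one (δ⁻¹^3)
    push_cast at this ⊢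
    linarith
  have hNpos : 0 < N := by
    rw [hNdef]
    apply Nat.floor_pos.mpr
    have h1 : (1:ℝ) ≤ δ⁻¹ := by linarith
    nlinarith [mul_nonneg (sub_nonneg.mpr h1) (by positivity : (0:ℝ) ≤ δ⁻¹^2 + δ⁻¹ + 1)]
  have hNposR : (0:ℝ) < N := Nat.cast_pos.mpr hNpos
  have hδ3pos : (0:ℝ) < δ^3 := by positivity
  have hδlt1 : δ ≤ 1 := by linarith
  have hδsq : δ^2 ≤ 1 := by nlinarith
  have hδ3lt : δ^3 ≤ 1/2 := by nlinarith [mul_le_mul_of_nonneg_left hδsq hδ.le]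
  have hhalf : 1/(2*(N:ℝ)) ≤ δ^3 := by
    rw [div_le_iff₀ (by positivity)]
    have h1 : 2 * δ^3 * (δ⁻¹^3 - 1) ≤ 2 * δ^3 * N :=
      mul_le_mul_of_nonneg_left hN1.le (by positivity)
    nlinarith
  have hclose : ∀ x : ℝ, |rnd N x - x| ≤ δ^3 := fun x =>
    le_trans (rnd_close hNpos x) hhalf
  have hsub : {p : ℝ × ℝ | p.1 ∈ Set.Ioo (0:ℝ) 1 ∧ p.2 ∈ Set.Ioo (0:ℝ) 1 ∧
        δ < |Real.sqrt (-2 * Real.log p.1) * Real.cos (2 * π * p.2) -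
              Real.sqrt (-2 * Real.log (rnd N p.1)) *
                Real.cos (2 * π * (rnd N p.2))|} ⊆
      (Set.Ioo (0:ℝ) (δ/4) ∪ Set.Ioo (1 - δ/4) 1) ×ˢ Set.Ioo (0:ℝ) 1 := by
    rintro ⟨z, θ⟩ ⟨hz, hθ, hbad⟩
    refine ⟨?_, hθ⟩
    by_contra hcz
    simp only [Set.mem_union, Set.mem_Ioo, not_or, not_and, not_lt] at hcz
    obtain ⟨h1, h2⟩ := hcz
    have hz1 : δ/4 ≤ z := h1 hz.1
    have hz2 : z ≤ 1 - δ/4 := by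
      by_contra hc
      push_neg at hc
      exact absurd (h2 hc) (not_le.mpr hz.2)
    have := main_est hδ hδ' hz1 hz2 (hclose z) (hclose θ)
    simp only [Set.mem_setOf_eq] at hbad
    linarith
  calc volume {p : ℝ × ℝ | p.1 ∈ Set.Ioo (0:ℝ) 1 ∧ p.2 ∈ Set.Ioo (0:ℝ) 1 ∧
        δ < |Real.sqrt (-2 * Real.log p.1) * Real.cos (2 * π * p.2) -
              Real.sqrt (-2 * Real.log (rnd N p.1)) *
                Real.cos (2 * π * (rnd N p.2))|}
      ≤ volume ((Set.Ioo (0:ℝ) (δ/4) ∪ Set.Ioo (1 - δ/4) 1) ×ˢ Set.Ioo (0:ℝ) 1) :=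
        measure_mono hsub
    _ = volume (Set.Ioo (0:ℝ) (δ/4) ∪ Set.Ioo (1 - δ/4) 1) * volume (Set.Ioo (0:ℝ) 1) := by
        rw [MeasureTheory.Measure.volume_eq_prod, MeasureTheory.Measure.prod_prod]
    _ ≤ (volume (Set.Ioo (0:ℝ) (δ/4)) + volume (Set.Ioo (1 - δ/4) 1)) *
          volume (Set.Ioo (0:ℝ) 1) :=
        mul_le_mul_left (measure_union_le _ _) _
    _ = (ENNReal.ofReal (δ/4 - 0) + ENNReal.ofReal (1 - (1 - δ/4))) * ENNReal.ofReal (1 - 0) := by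
        rw [Real.volume_Ioo, Real.volume_Ioo, Real.volume_Ioo]
    _ = ENNReal.ofReal (δ/2) := by
        rw [← ENNReal.ofReal_add (by linarith) (by linarith)]
        norm_num
        rw [show δ/4 + δ/4 = δ/2 by ring]
    _ < ENNReal.ofReal δ := by
        rw [ENNReal.ofReal_lt_ofReal_iff hδ]
        linarith
end

section
/- Let h be a Hermite polynomial of degree d on ℝ^n (a product of normalized one-variable Hermite polynomials of total degree d). Then the sum of the absolute values of the coefficients of h (in the monomial basis) is at most C^d for an absolute constant C. -/
open Polynomial MvPolynomial Finset
open scoped Nat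

/-- Dominance: `q` has nonneg coefficients bounding `p`'s in absolute value. -/
def Dom {n : ℕ} (p q : MvPolynomial (Fin n) ℝ) : Prop :=
  ∀ m, |MvPolynomial.coeff m p| ≤ MvPolynomial.coeff m q

lemma dom_one {n : ℕ} : Dom (1 : MvPolynomial (Fin n) ℝ) 1 := by
  intro m
  rw [MvPolynomial.coeff_one]
  split_ifs <;> simp

lemma dom_mul {n : ℕ} {p₁ p₂ q₁ q₂ : MvPolynomial (Fin n) ℝ}
    (h₁ : Dom p₁ q₁) (h₂ : Dom p₂ q₂) : Dom (p₁ * p₂) (q₁ * q₂) := by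
  intro m
  rw [MvPolynomial.coeff_mul, MvPolynomial.coeff_mul]
  calc |∑ x ∈ Finset.HasAntidiagonal.antidiagonal m, MvPolynomial.coeff x.1 p₁ * MvPolynomial.coeff x.2 p₂|
      ≤ ∑ x ∈ Finset.HasAntidiagonal.antidiagonal m, |MvPolynomial.coeff x.1 p₁ * MvPolynomial.coeff x.2 p₂| :=
        Finset.abs_sum_le_sum_abs _ _
    _ ≤ ∑ x ∈ Finset.HasAntidiagonal.antidiagonal m, MvPolynomial.coeff x.1 q₁ * MvPolynomial.coeff x.2 q₂ := by
        refine Finset.sum_le_sum fun x _ => ?_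
        rw [abs_mul]
        exact mul_le_mul (h₁ x.1) (h₂ x.2) (abs_nonneg _) ((abs_nonneg _).trans (h₁ x.1))

lemma dom_prod {n N : ℕ} {p q : Fin N → MvPolynomial (Fin n) ℝ}
    (h : ∀ i, Dom (p i) (q i)) : Dom (∏ i, p i) (∏ i, q i) := by
  classical
  induction (Finset.univ : Finset (Fin N)) using Finset.induction with
  | empty => simpa using dom_one
  | insert _ _ hx ih =>
    rw [Finset.prod_insert hx, Finset.prod_insert hx]
    exact dom_mul (h _) ih

lemma dom_smul {n : ℕ} {p q : MvPolynomial (Fin n) ℝ} {r : ℝ} (hr : 0 ≤ r)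
    (h : Dom p q) : Dom (r • p) (r • q) := by
  intro m
  rw [MvPolynomial.coeff_smul, MvPolynomial.coeff_smul, smul_eq_mul, smul_eq_mul, abs_mul,
    abs_of_nonneg hr]
  exact mul_le_mul_of_nonneg_left (h m) hr

lemma dom_le_eval_one {n : ℕ} {p q : MvPolynomial (Fin n) ℝ} (h : Dom p q) :
    ∑ m ∈ p.support, |MvPolynomial.coeff m p| ≤ MvPolynomial.eval (fun _ => 1) q := by
  classical
  have hq : ∀ m, 0 ≤ MvPolynomial.coeff m q := fun m => (abs_nonneg _).trans (h m)
  have heval : MvPolynomial.eval (fun _ => (1:ℝ)) q = ∑ m ∈ q.support, MvPolynomial.coeff m q := by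
    rw [MvPolynomial.eval_eq]
    exact Finset.sum_congr rfl fun m _ => by simp
  rw [heval]
  calc ∑ m ∈ p.support, |MvPolynomial.coeff m p|
      ≤ ∑ m ∈ p.support, MvPolynomial.coeff m q := Finset.sum_le_sum fun m _ => h m
    _ ≤ ∑ m ∈ p.support ∪ q.support, MvPolynomial.coeff m q :=
        Finset.sum_le_sum_of_subset_of_nonneg Finset.subset_union_left fun m _ _ => hq m
    _ = ∑ m ∈ q.support, MvPolynomial.coeff m q := by
        refine (Finset.sum_subset Finset.subset_union_right fun m _ hm => ?_).symm
        exact MvPolynomial.notMem_support_iff.mp hm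

/-- The polynomial with absolute values of coefficients. -/
noncomputable def absPoly (p : Polynomial ℝ) : Polynomial ℝ :=
  ⟨AddMonoidAlgebra.ofCoeff (Finsupp.mapRange (|·|) abs_zero p.toFinsupp.coeff)⟩

lemma absPoly_coeff (p : Polynomial ℝ) (j : ℕ) : (absPoly p).coeff j = |p.coeff j| := rfl

lemma natDegree_absPoly_le (p : Polynomial ℝ) : (absPoly p).natDegree ≤ p.natDegree := by
  refine Polynomial.natDegree_le_iff_coeff_eq_zero.mpr fun m hm => ?_
  rw [absPoly_coeff, abs_eq_zero]
  exact Polynomial.coeff_eq_zero_of_natDegree_lt hm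

lemma coeff_aeval_X {n : ℕ} (p : Polynomial ℝ) (i : Fin n) (N : ℕ) (hN : p.natDegree < N)
    (m : Fin n →₀ ℕ) :
    MvPolynomial.coeff m (Polynomial.aeval (R := ℝ) (MvPolynomial.X i) p) =
      ∑ j ∈ Finset.range N, p.coeff j * MvPolynomial.coeff m (MvPolynomial.X i ^ j) := by
  rw [Polynomial.aeval_def, Polynomial.eval₂_eq_sum_range' _ hN, MvPolynomial.coeff_sum]
  refine Finset.sum_congr rfl fun j _ => ?_
  rw [MvPolynomial.algebraMap_eq, MvPolynomial.coeff_C_mul]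

lemma dom_aeval {n : ℕ} (p : Polynomial ℝ) (i : Fin n) :
    Dom (Polynomial.aeval (R := ℝ) (MvPolynomial.X i) p)
      (Polynomial.aeval (R := ℝ) (MvPolynomial.X i) (absPoly p)) := by
  intro m
  rw [coeff_aeval_X p i (p.natDegree + 1) (Nat.lt_succ_self _) m,
    coeff_aeval_X (absPoly p) i (p.natDegree + 1)
      (Nat.lt_succ_of_le (natDegree_absPoly_le p)) m]
  refine (Finset.abs_sum_le_sum_abs _ _).trans (Finset.sum_le_sum fun j _ => ?_)
  rw [absPoly_coeff, abs_mul, MvPolynomial.coeff_X_pow]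
  split_ifs <;> simp

lemma eval_one_aeval_X {n : ℕ} (p : Polynomial ℝ) (i : Fin n) :
    MvPolynomial.eval (fun _ => (1:ℝ)) (Polynomial.aeval (R := ℝ) (MvPolynomial.X i) p) =
      ∑ j ∈ Finset.range (p.natDegree + 1), p.coeff j := by
  rw [Polynomial.aeval_def, Polynomial.eval₂_eq_sum_range, map_sum]
  exact Finset.sum_congr rfl fun j _ => by simp [MvPolynomial.algebraMap_eq]

lemma doubleFactorial_le_succ (s : ℕ) : s‼ ≤ (s + 1)‼ := by
  induction s using Nat.strong_induction_on with
  | _ s ih =>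
    match s with
    | 0 => simp [Nat.doubleFactorial]
    | 1 => simp [Nat.doubleFactorial]
    | (s + 2) =>
      rw [Nat.doubleFactorial_add_two, show s + 2 + 1 = s + 1 + 2 from rfl,
        Nat.doubleFactorial_add_two]
      exact Nat.mul_le_mul (by omega) (ih s (by omega))

lemma doubleFactorial_sq_le (m : ℕ) : (m - 1)‼ ^ 2 ≤ m ! := by
  match m with
  | 0 => simp [Nat.doubleFactorial]
  | (s + 1) =>
    rw [Nat.factorial_eq_mul_doubleFactorial, sq, Nat.add_sub_cancel]
    exact Nat.mul_le_mul_right _ (doubleFactorial_le_succ s)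

lemma hermite_coeff_abs_le (k j : ℕ) :
    |((Polynomial.hermite k).coeff j : ℝ)| ≤ Real.sqrt (k !) * (k.choose j) := by
  rw [Polynomial.coeff_hermite]
  split_ifs with h
  · push_cast
    rw [abs_mul, abs_mul, abs_pow, abs_neg, abs_one, one_pow, one_mul,
      Nat.abs_cast, Nat.abs_cast]
    refine mul_le_mul_of_nonneg_right ?_ (Nat.cast_nonneg _)
    rw [Real.le_sqrt (Nat.cast_nonneg _) (Nat.cast_nonneg _)]
    have h1 : ((k - j - 1)‼ : ℝ) ^ 2 = (((k - j - 1)‼ ^ 2 : ℕ) : ℝ) := by push_cast; ring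
    rw [h1, Nat.cast_le]
    exact (doubleFactorial_sq_le (k - j)).trans (Nat.factorial_le (Nat.sub_le _ _))
  · simp [mul_nonneg (Real.sqrt_nonneg _) (Nat.cast_nonneg _)]

/-- The normalized multivariate Hermite polynomial `h_a(x) = ∏ i h_{a_i}(x_i)`, where
`h_k = (1/√k!)·He_k` and `He_k` is the probabilists' Hermite polynomial. -/
noncomputable def hermiteMv (n : ℕ) (a : Fin n → ℕ) : MvPolynomial (Fin n) ℝ :=
  ∏ i : Fin n, (Real.sqrt (Nat.factorial (a i)))⁻¹ •
    Polynomial.aeval (R := ℝ) (MvPolynomial.X i) ((Polynomial.hermite (a i)).map (Int.castRingHom ℝ))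

/-- there is an absolute constant `C` such that for every degree-`d`
multivariate Hermite polynomial `h = ∏ i h_{a_i}(x_i)` (with `d = Σ a_i`), the sum of the
absolute values of its monomial coefficients is at most `C^d`. -/
theorem stmt11 :
    ∃ C : ℝ, 0 < C ∧ ∀ (n : ℕ) (a : Fin n → ℕ),
      ∑ m ∈ (hermiteMv n a).support, |MvPolynomial.coeff m (hermiteMv n a)| ≤
        C ^ (∑ i, a i) := by
  refine ⟨2, two_pos, fun n a => ?_⟩
  classical
  set p : Fin n → Polynomial ℝ :=
    fun i => (Polynomial.hermite (a i)).map (Int.castRingHom ℝ) with hp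
  set q : Fin n → MvPolynomial (Fin n) ℝ :=
    fun i => (Real.sqrt ((a i)!))⁻¹ • Polynomial.aeval (R := ℝ) (MvPolynomial.X i)
      (absPoly (p i)) with hqdef
  have hsqrt_pos : ∀ i : Fin n, 0 < Real.sqrt ((a i)!) := fun i =>
    Real.sqrt_pos.mpr (by exact_mod_cast Nat.factorial_pos (a i))
  have hdom : Dom (hermiteMv n a) (∏ i, q i) := by
    rw [hermiteMv]
    exact dom_prod fun i => dom_smul (inv_nonneg.mpr (hsqrt_pos i).le) (dom_aeval (p i) i)
  refine (dom_le_eval_one hdom).trans ?_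
  rw [map_prod]
  have hbound : ∀ i : Fin n,
      MvPolynomial.eval (fun _ => (1:ℝ)) (q i) ≤ 2 ^ (a i) := by
    intro i
    have hc : ∀ j, (p i).coeff j = ((Polynomial.hermite (a i)).coeff j : ℝ) := fun j => by
      rw [hp]; simp [Polynomial.coeff_map]
    rw [hqdef]
    simp only [MvPolynomial.smul_eq_C_mul, map_mul, MvPolynomial.eval_C]
    rw [eval_one_aeval_X]
    have hsum : ∑ j ∈ Finset.range ((absPoly (p i)).natDegree + 1), (absPoly (p i)).coeff j ≤
        Real.sqrt ((a i)!) * 2 ^ (a i) := by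
      calc ∑ j ∈ Finset.range ((absPoly (p i)).natDegree + 1), (absPoly (p i)).coeff j
          ≤ ∑ j ∈ Finset.range ((a i) + 1), (absPoly (p i)).coeff j := by
            refine Finset.sum_le_sum_of_subset_of_nonneg ?_ ?_
            · refine Finset.range_subset_range.mpr (Nat.succ_le_succ ?_)
              refine (natDegree_absPoly_le _).trans ?_
              rw [hp]
              refine Polynomial.natDegree_map_le.trans ?_
              rw [Polynomial.natDegree_hermite]
            · intro j _ _; rw [absPoly_coeff]; exact abs_nonneg _
        _ ≤ ∑ j ∈ Finset.range ((a i) + 1), Real.sqrt ((a i)!) * ((a i).choose j) := by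
            refine Finset.sum_le_sum fun j _ => ?_
            rw [absPoly_coeff, hc]
            exact hermite_coeff_abs_le (a i) j
        _ = Real.sqrt ((a i)!) * 2 ^ (a i) := by
            rw [← Finset.mul_sum]
            congr 1
            rw [← Nat.cast_sum, Nat.sum_range_choose]
            push_cast; ring
    calc (Real.sqrt ((a i)!))⁻¹ *
          ∑ j ∈ Finset.range ((absPoly (p i)).natDegree + 1), (absPoly (p i)).coeff j
        ≤ (Real.sqrt ((a i)!))⁻¹ * (Real.sqrt ((a i)!) * 2 ^ (a i)) :=
          mul_le_mul_of_nonneg_left hsum (inv_nonneg.mpr (hsqrt_pos i).le)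
      _ = 2 ^ (a i) := by
          rw [← mul_assoc, inv_mul_cancel₀ (hsqrt_pos i).ne', one_mul]
  calc ∏ i, MvPolynomial.eval (fun _ => (1:ℝ)) (q i)
      ≤ ∏ i, (2:ℝ) ^ (a i) := by
        refine Finset.prod_le_prod (fun i _ => ?_) (fun i _ => hbound i)
        rw [hqdef]
        simp only [MvPolynomial.smul_eq_C_mul, map_mul, MvPolynomial.eval_C]
        refine mul_nonneg (inv_nonneg.mpr (hsqrt_pos i).le) ?_
        rw [eval_one_aeval_X]
        exact Finset.sum_nonneg fun j _ => by rw [absPoly_coeff]; exact abs_nonneg _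
    _ = 2 ^ (∑ i, a i) := by rw [← Finset.prod_pow_eq_pow_sum]
end
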